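/- The tree language L₃ = {γⁿ(σ(γⁿ#, γⁿ#)) | n ∈ ℕ} over Σ = {σ⁽²⁾, γ⁽¹⁾, #⁽⁰⁾} is recognized by the 2-PTA with states {q₀,q₁}, constraint C = {(i,i) | i ∈ ℕ}, and transitions q₀ → γ(q₀(1,0)), q₀ → σ(q₁(0,0), q₁(0,0)), q₁ → γ(q₁(0,1)), q₁ → #, but L₃ is not recognizable by any linear PTAR. -/

import Mathlib

/-! ## Trees over ranked alphabets: a symbol `s` has `ar s` children -/

inductive GTree (S : Type) (ar : S → ℕ) : Type where
  | node (s : S) (c : Fin (ar s) → GTree S ar) : GTree S ar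

namespace GTree
variable {S : Type} {ar : S → ℕ}

/-- The height of a tree (leaves have height 0). -/
def height : GTree S ar → ℕ
  | node _ c => Finset.univ.sup fun i => height (c i) + 1

/-- The size (number of positions) of a tree. -/
def size : GTree S ar → ℕ
  | node _ c => 1 + ∑ i, size (c i)

/-- The subtree at a position (a list of child indices), if the position exists. -/
def subAt : GTree S ar → List ℕ → Option (GTree S ar)
  | t, [] => some t
  | node s c, i :: ρ => if h : i < ar s then subAt (c ⟨i, h⟩) ρ else none

/-- The list of path words of all complete (root-to-leaf) paths. -/
def pathWords : GTree S ar → List (List S)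
  | node s c =>
    if _ : ar s = 0 then [[s]]
    else ((List.finRange (ar s)).map fun i => (pathWords (c i)).map (s :: ·)).flatten

end GTree

/-! ## Semilinear sets -/

def IsLinearSetFin {m : ℕ} (C : Set (Fin m → ℕ)) : Prop :=
  ∃ (l : ℕ) (d0 : Fin m → ℕ) (d : Fin l → Fin m → ℕ),
    C = {v | ∃ c : Fin l → ℕ, v = d0 + ∑ i, c i • d i}

def IsSemilinear {m : ℕ} (C : Set (Fin m → ℕ)) : Prop :=
  ∃ (k : ℕ) (L : Fin k → Set (Fin m → ℕ)), (∀ i, IsLinearSetFin (L i)) ∧ C = ⋃ i, L i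

/-! ## Non-global Parikh tree automata with reset (PTAR) -/

/-- Update of a counter vector: add `d`, or reset to `0` for `↺` (`none`). -/
def updW {m : ℕ} (w : Fin m → ℕ) : Option (Fin m → ℕ) → Fin m → ℕ
  | some d => w + d
  | none => 0

structure PTAR (S : Type) (ar : S → ℕ) (m : ℕ) where
  Q : Type
  finQ : Fintype Q
  init : Q
  D : Finset (Fin m → ℕ)
  trans : Q → (s : S) → (Fin (ar s) → Q × Option (Fin m → ℕ)) → Prop
  transD : ∀ q s f, trans q s f → ∀ i d, (f i).2 = some d → d ∈ D
  C : Set (Fin m → ℕ)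
  semiC : IsSemilinear C

inductive PTAR.Acc {S : Type} {ar : S → ℕ} {m : ℕ} (A : PTAR S ar m) :
    A.Q → (Fin m → ℕ) → GTree S ar → Prop where
  | node {q : A.Q} {w : Fin m → ℕ} {s : S} {f : Fin (ar s) → A.Q × Option (Fin m → ℕ)}
      {c : Fin (ar s) → GTree S ar}
      (ht : A.trans q s f) (hC : ar s = 0 → w ∈ A.C)
      (hc : ∀ i, PTAR.Acc A (f i).1 (updW w (f i).2) (c i)) :
      PTAR.Acc A q w (.node s c)

def PTAR.Lang {S : Type} {ar : S → ℕ} {m : ℕ} (A : PTAR S ar m) : Set (GTree S ar) :=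
  {ξ | A.Acc A.init 0 ξ}

/-- A PTAR is linear if every transition passes the counter configuration to at most
one child; all other children are reset. -/
def PTAR.IsLinear {S : Type} {ar : S → ℕ} {m : ℕ} (A : PTAR S ar m) : Prop :=
  ∀ q s f, A.trans q s f → ∀ i j, (f i).2 ≠ none → (f j).2 ≠ none → i = j

/-! ## The ranked alphabet {σ⁽²⁾, γ⁽¹⁾, #⁽⁰⁾} -/

inductive Sg : Type where | sig | gam | hash
  deriving DecidableEq

def arG : Sg → ℕ
  | .sig => 2
  | .gam => 1
  | .hash => 0

instance : Fintype Sg :=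
  ⟨⟨{Sg.sig, Sg.gam, Sg.hash}, by decide⟩, fun x => by cases x <;> decide⟩

def hashT : GTree Sg arG := .node .hash ![]
def gamT (t : GTree Sg arG) : GTree Sg arG := .node .gam ![t]
def sigT (l r : GTree Sg arG) : GTree Sg arG := .node .sig ![l, r]

/-- γⁿ(t) -/
def gpow : ℕ → GTree Sg arG → GTree Sg arG
  | 0, t => t
  | n + 1, t => gamT (gpow n t)

/-- L_γγ = {σ(γⁿ#, γⁿ#) | n ∈ ℕ} -/
def Lgg : Set (GTree Sg arG) := {ξ | ∃ n, ξ = sigT (gpow n hashT) (gpow n hashT)}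

/-- L₃ = {γⁿ(σ(γⁿ#, γⁿ#)) | n ∈ ℕ} -/
def L3 : Set (GTree Sg arG) := {ξ | ∃ n, ξ = gpow n (sigT (gpow n hashT) (gpow n hashT))}

/-! L₃ = {γⁿ(σ(γⁿ#,γⁿ#)) | n ∈ ℕ} is recognized by the concrete 2-PTA with states
q₀ (= `true`), q₁ (= `false`), constraint C = {(i,i) | i ∈ ℕ} and transitions
q₀ → γ(q₀(1,0)), q₀ → σ(q₁(0,0), q₁(0,0)), q₁ → γ(q₁(0,1)), q₁ → #, but L₃ is not
recognized by any linear PTAR. -/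

inductive Acc3 : Bool → ℕ → ℕ → GTree Sg arG → Prop where
  | g0 {x y : ℕ} {t} : Acc3 true (x + 1) y t → Acc3 true x y (gamT t)
  | s0 {x y : ℕ} {l r} : Acc3 false x y l → Acc3 false x y r → Acc3 true x y (sigT l r)
  | g1 {x y : ℕ} {t} : Acc3 false x (y + 1) t → Acc3 false x y (gamT t)
  | h1 {x : ℕ} : Acc3 false x x hashT


/-! ### Auxiliary lemmas -/

lemma gamT_inj {t t' : GTree Sg arG} (h : gamT t = gamT t') : t = t' := by
  injection h with hs hc
  exact congrFun hc 0

lemma sigT_inj {a b a' b' : GTree Sg arG} (h : sigT a b = sigT a' b') :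
    a = a' ∧ b = b' := by
  injection h with hs hc
  exact ⟨congrFun hc 0, congrFun hc 1⟩

lemma sig_ne_gam {a b : GTree Sg arG} {c' : Fin (arG Sg.gam) → GTree Sg arG} :
    sigT a b ≠ GTree.node Sg.gam c' := by
  intro h
  injection h with hs
  cases hs

lemma hash_ne_gam {c' : Fin (arG Sg.gam) → GTree Sg arG} :
    hashT ≠ GTree.node Sg.gam c' := by
  intro h
  injection h with hs
  cases hs

lemma gpow_sig_inj : ∀ {n k : ℕ} {a b a' b' : GTree Sg arG},
    gpow n (sigT a b) = gpow k (sigT a' b') → n = k ∧ a = a' ∧ b = b' := by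
  intro n
  induction n with
  | zero =>
    intro k a b a' b' h
    cases k with
    | zero => exact ⟨rfl, sigT_inj h⟩
    | succ k => exact absurd h sig_ne_gam
  | succ n ih =>
    intro k a b a' b' h
    cases k with
    | zero => exact absurd h.symm sig_ne_gam
    | succ k =>
      obtain ⟨h1, h2, h3⟩ := ih (gamT_inj h)
      exact ⟨by omega, h2, h3⟩

lemma gpow_hash_inj : ∀ {n k : ℕ}, gpow n hashT = gpow k hashT → n = k := by
  intro n
  induction n with
  | zero =>
    intro k h
    cases k with
    | zero => rfl
    | succ k => exact absurd h hash_ne_gam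
  | succ n ih =>
    intro k h
    cases k with
    | zero => exact absurd h.symm hash_ne_gam
    | succ k => exact congrArg Nat.succ (ih (gamT_inj h))

/-! Soundness of Acc3 -/

lemma acc3_sound {b x y t} (h : Acc3 b x y t) :
    (b = true → ∃ n k, t = gpow n (sigT (gpow k hashT) (gpow k hashT)) ∧ x + n = y + k) ∧
    (b = false → ∃ n, t = gpow n hashT ∧ x = y + n) := by
  induction h with
  | g0 h ih =>
    refine ⟨fun _ => ?_, (fun hb => nomatch hb)⟩
    obtain ⟨n, k, ht, hx⟩ := ih.1 rfl
    refine ⟨n + 1, k, ?_, by omega⟩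
    rw [ht]; rfl
  | s0 hl hr ihl ihr =>
    refine ⟨fun _ => ?_, (fun hb => nomatch hb)⟩
    obtain ⟨n, htl, hxl⟩ := ihl.2 rfl
    obtain ⟨n', htr, hxr⟩ := ihr.2 rfl
    have hnn : n = n' := by omega
    refine ⟨0, n, ?_, by omega⟩
    rw [htl, htr, hnn]; rfl
  | g1 h ih =>
    refine ⟨(fun hb => nomatch hb), fun _ => ?_⟩
    obtain ⟨n, ht, hx⟩ := ih.2 rfl
    refine ⟨n + 1, ?_, by omega⟩
    rw [ht]; rfl
  | h1 =>
    refine ⟨(fun hb => nomatch hb), fun _ => ⟨0, rfl, by omega⟩⟩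

lemma acc3_hash : ∀ (n x y : ℕ), x = y + n → Acc3 false x y (gpow n hashT) := by
  intro n
  induction n with
  | zero => intro x y h; rw [show x = y by omega]; exact Acc3.h1
  | succ n ih =>
    intro x y h
    exact Acc3.g1 (ih x (y + 1) (by omega))

lemma acc3_true : ∀ (n k x y : ℕ), x + n = y + k →
    Acc3 true x y (gpow n (sigT (gpow k hashT) (gpow k hashT))) := by
  intro n
  induction n with
  | zero =>
    intro k x y h
    exact Acc3.s0 (acc3_hash k x y (by omega)) (acc3_hash k x y (by omega))
  | succ n ih =>
    intro k x y h
    exact Acc3.g0 (ih k (x + 1) y (by omega))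

/-! PTAR inversion lemmas -/

lemma acc_node_inv {m : ℕ} {A : PTAR Sg arG m} {q w s c}
    (h : A.Acc q w (.node s c)) :
    ∃ f, A.trans q s f ∧ (arG s = 0 → w ∈ A.C) ∧
      ∀ i, A.Acc (f i).1 (updW w (f i).2) (c i) := by
  cases h with
  | node ht hC hc => exact ⟨_, ht, hC, hc⟩

def i0g : Fin (arG Sg.gam) := ⟨0, by decide⟩
def i0s : Fin (arG Sg.sig) := ⟨0, by decide⟩
def i1s : Fin (arG Sg.sig) := ⟨1, by decide⟩

lemma fin_gam (i : Fin (arG Sg.gam)) : i = i0g := by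
  obtain ⟨iv, hlt⟩ := i
  have : iv < 1 := hlt
  have : iv = 0 := by omega
  subst this; rfl

lemma fin_sig (i : Fin (arG Sg.sig)) : i = i0s ∨ i = i1s := by
  obtain ⟨iv, hlt⟩ := i
  have h2 : iv < 2 := hlt
  rcases (by omega : iv = 0 ∨ iv = 1) with h | h
  · left; subst h; rfl
  · right; subst h; rfl

lemma acc_gam_inv {m : ℕ} {A : PTAR Sg arG m} {q w u} (h : A.Acc q w (gamT u)) :
    ∃ q' w', A.Acc q' w' u ∧ ∀ u', A.Acc q' w' u' → A.Acc q w (gamT u') := by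
  obtain ⟨f, ht, hC, hc⟩ := acc_node_inv (h : A.Acc q w (.node .gam ![u]))
  refine ⟨(f i0g).1, updW w (f i0g).2, hc i0g, fun u' hu' => ?_⟩
  show A.Acc q w (.node .gam ![u'])
  refine PTAR.Acc.node ht hC (fun i => ?_)
  rw [fin_gam i]
  exact hu'

lemma acc_gpow_inv {m : ℕ} {A : PTAR Sg arG m} :
    ∀ (n : ℕ) {q w u}, A.Acc q w (gpow n u) →
      ∃ q' w', A.Acc q' w' u ∧ ∀ u', A.Acc q' w' u' → A.Acc q w (gpow n u') := by
  intro n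
  induction n with
  | zero => exact fun h => ⟨_, _, h, fun u' h' => h'⟩
  | succ n ih =>
    intro q w u h
    obtain ⟨q1, w1, h1, hre1⟩ := acc_gam_inv (h : A.Acc q w (gamT (gpow n u)))
    obtain ⟨q2, w2, h2, hre2⟩ := ih h1
    exact ⟨q2, w2, h2, fun u' h' => hre1 _ (hre2 _ h')⟩

lemma acc_sig_inv {m : ℕ} {A : PTAR Sg arG m} (hlin : A.IsLinear) {q w l r}
    (h : A.Acc q w (sigT l r)) :
    ∃ p : A.Q, (A.Acc p 0 l ∧ ∀ t, A.Acc p 0 t → A.Acc q w (sigT t r)) ∨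
               (A.Acc p 0 r ∧ ∀ t, A.Acc p 0 t → A.Acc q w (sigT l t)) := by
  obtain ⟨f, ht, hC, hc⟩ := acc_node_inv (h : A.Acc q w (.node .sig ![l, r]))
  have hl : A.Acc (f i0s).1 (updW w (f i0s).2) l := hc i0s
  have hr : A.Acc (f i1s).1 (updW w (f i1s).2) r := hc i1s
  by_cases h0 : (f i0s).2 = none
  · refine ⟨(f i0s).1, Or.inl ⟨?_, fun t htac => ?_⟩⟩
    · rw [h0] at hl; exact hl
    · show A.Acc q w (.node .sig ![t, r])
      refine PTAR.Acc.node ht hC (fun i => ?_)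
      rcases fin_sig i with hi | hi <;> subst hi
      · rw [h0]; exact htac
      · exact hr
  · have h1 : (f i1s).2 = none := by
      by_contra h1
      exact absurd (congrArg Fin.val (hlin q Sg.sig f ht i0s i1s h0 h1)) (by decide)
    refine ⟨(f i1s).1, Or.inr ⟨?_, fun t htac => ?_⟩⟩
    · rw [h1] at hr; exact hr
    · show A.Acc q w (.node .sig ![l, t])
      refine PTAR.Acc.node ht hC (fun i => ?_)
      rcases fin_sig i with hi | hi <;> subst hi
      · exact hl
      · rw [h1]; exact htac

theorem L3_pta_but_not_linear_ptar :
    (∀ ξ : GTree Sg arG, Acc3 true 0 0 ξ ↔ ξ ∈ L3) ∧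
    ¬ ∃ (m : ℕ) (A : PTAR Sg arG m), A.IsLinear ∧ A.Lang = L3 := by
  constructor
  · intro ξ
    constructor
    · intro h
      obtain ⟨n, k, ht, hx⟩ := (acc3_sound h).1 rfl
      have : n = k := by omega
      subst this
      exact ⟨n, ht⟩
    · rintro ⟨n, rfl⟩
      exact acc3_true n n 0 0 (by omega)
  · rintro ⟨m, A, hlin, hL⟩
    haveI := A.finQ
    have key : ∀ n : ℕ, ∃ p : A.Q, A.Acc p 0 (gpow n hashT) ∧
        ∀ t, A.Acc p 0 t →
          (gpow n (sigT t (gpow n hashT)) ∈ A.Lang ∨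
           gpow n (sigT (gpow n hashT) t) ∈ A.Lang) := by
      intro n
      have hmem : gpow n (sigT (gpow n hashT) (gpow n hashT)) ∈ A.Lang := by
        rw [hL]; exact ⟨n, rfl⟩
      obtain ⟨q', w', hq, hre⟩ := acc_gpow_inv n hmem
      obtain ⟨p, hp⟩ := acc_sig_inv hlin hq
      rcases hp with ⟨hacc, hbuild⟩ | ⟨hacc, hbuild⟩
      · exact ⟨p, hacc, fun t ht => Or.inl (hre _ (hbuild t ht))⟩
      · exact ⟨p, hacc, fun t ht => Or.inr (hre _ (hbuild t ht))⟩
    choose p hp1 hp2 using key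
    obtain ⟨n1, n2, hne, hpq⟩ := Finite.exists_ne_map_eq_of_infinite p
    have hacc2 : A.Acc (p n1) 0 (gpow n2 hashT) := hpq ▸ hp1 n2
    rcases hp2 n1 (gpow n2 hashT) hacc2 with hmem | hmem
    · rw [hL] at hmem
      obtain ⟨k, hk⟩ := hmem
      obtain ⟨h1, h2, h3⟩ := gpow_sig_inj hk
      exact hne (by rw [gpow_hash_inj h2, gpow_hash_inj h3])
    · rw [hL] at hmem
      obtain ⟨k, hk⟩ := hmem
      obtain ⟨h1, h2, h3⟩ := gpow_sig_inj hk
      exact hne (by rw [gpow_hash_inj h2, gpow_hash_inj h3])
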